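/- For every β ∈ (1/3, 1/2): Σ_{F∈ℱ_{>0}} λ_F · s^F(β) ≤ f(β)·p* componentwise, where f(β) := β·ω·(3 − 1/β − ω)/(1 − ω) with ω := 1 − √(1/β − 2). -/

import Mathlib

open scoped Classical
open Finset

noncomputable section

variable {V : Type*} [Fintype V] [DecidableEq V]

/-- The edge set of a graph as a `Finset` of `Sym2 V`. -/
def edgesOf (G : SimpleGraph V) : Finset (Sym2 V) :=
  Finset.univ.filter (fun e => e ∈ G.edgeSet)

/-- Degree of a vertex in a set of edges. -/
def degOn (J : Finset (Sym2 V)) (v : V) : ℕ :=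
  (J.filter (fun e => v ∈ e)).card

/-- The set of vertices of odd degree in a set of edges. -/
def oddVerts (J : Finset (Sym2 V)) : Finset V :=
  Finset.univ.filter (fun v => Odd (degOn J v))

/-- `J` is a `T`-join of `G`: a set of edges of `G` whose odd-degree vertex set is `T`. -/
def IsTJoin (G : SimpleGraph V) (T : Finset V) (J : Finset (Sym2 V)) : Prop :=
  J ⊆ edgesOf G ∧ oddVerts J = T

/-- `F` is a spanning tree of `G`: edges of `G`, connected, with `|V| - 1` edges. -/
def IsSpanningTree (G : SimpleGraph V) (F : Finset (Sym2 V)) : Prop :=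
  F ⊆ edgesOf G ∧ (SimpleGraph.fromEdgeSet (F : Set (Sym2 V))).Connected ∧
    F.card + 1 = Fintype.card V

/-- δ(W): the set of edges of `G` with exactly one endpoint in `W`. -/
def cutEdges (G : SimpleGraph V) (W : Finset V) : Finset (Sym2 V) :=
  (edgesOf G).filter (fun e => ∃ u v, e = s(u, v) ∧ u ∈ W ∧ v ∉ W)

/-- `𝒲` is a partition of the vertex set `V`. -/
def IsPartitionOf (𝒲 : Finset (Finset V)) : Prop :=
  (∀ W ∈ 𝒲, W.Nonempty) ∧
  (∀ W₁ ∈ 𝒲, ∀ W₂ ∈ 𝒲, W₁ ≠ W₂ → Disjoint W₁ W₂) ∧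
  (∀ v : V, ∃ W ∈ 𝒲, v ∈ W)

/-- δ(𝒲): the set of edges of `G` whose endpoints lie in different classes of `𝒲`. -/
def partitionCut (G : SimpleGraph V) (𝒲 : Finset (Finset V)) : Finset (Sym2 V) :=
  (edgesOf G).filter (fun e => ¬ ∃ W ∈ 𝒲, ∀ v ∈ e, v ∈ W)

/-- `x(A) = Σ_{e ∈ A} x(e)`. -/
def xval (x : Sym2 V → ℝ) (A : Finset (Sym2 V)) : ℝ := ∑ e ∈ A, x e

/-- `cᵀx`, summed over the edges of `G`. -/
def dotE (G : SimpleGraph V) (c x : Sym2 V → ℝ) : ℝ := ∑ e ∈ edgesOf G, c e * x e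

/-- Membership in the polyhedron `P(G,T)`. -/
def memP (G : SimpleGraph V) (T : Finset V) (x : Sym2 V → ℝ) : Prop :=
  (∀ W : Finset V, W.Nonempty → W ≠ Finset.univ → Even ((W ∩ T).card) →
      2 ≤ xval x (cutEdges G W)) ∧
  (∀ 𝒲 : Finset (Finset V), IsPartitionOf 𝒲 →
      (𝒲.card : ℝ) - 1 ≤ xval x (partitionCut G 𝒲)) ∧
  (∀ e ∈ edgesOf G, 0 ≤ x e ∧ x e ≤ 2)

/-- `m` (an edge multiplicity vector, values in `{0,1,2}`) is a `T`-tour of `G`: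
its support consists of edges of `G`, the support spans a connected graph on `V`,
and the vertices of odd degree (with multiplicities) are exactly `T`. -/
def IsTTour (G : SimpleGraph V) (T : Finset V) (m : Sym2 V → ℕ) : Prop :=
  (∀ e, 0 < m e → e ∈ G.edgeSet) ∧ (∀ e, m e ≤ 2) ∧
  (SimpleGraph.fromEdgeSet {e | 0 < m e}).Connected ∧
  (∀ v : V, (Odd (∑ e ∈ edgesOf G, if v ∈ e then m e else 0) ↔ v ∈ T))

/-- The `c`-length of a multiset of edges given by multiplicities `m`. -/
def tourCost (G : SimpleGraph V) (c : Sym2 V → ℝ) (m : Sym2 V → ℕ) : ℝ :=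
  ∑ e ∈ edgesOf G, (m e : ℝ) * c e

/-- `opt(G,T,c)`: the minimum `c`-length of a `T`-tour. -/
def optLen (G : SimpleGraph V) (T : Finset V) (c : Sym2 V → ℝ) : ℝ :=
  sInf {L : ℝ | ∃ m, IsTTour G T m ∧ L = tourCost G c m}

/-- The `c`-length of a set of edges. -/
def setCost (c : Sym2 V → ℝ) (J : Finset (Sym2 V)) : ℝ := ∑ e ∈ J, c e

/-- `τ(G,T',c)`: the minimum `c`-length of a `T'`-join. -/
def tau (G : SimpleGraph V) (T' : Finset V) (c : Sym2 V → ℝ) : ℝ :=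
  sInf {L : ℝ | ∃ J, IsTJoin G T' J ∧ L = setCost c J}

/-- Membership in `Q₊(G,T')`: nonnegative and at least `1` on every `T'`-cut. -/
def memQplus (G : SimpleGraph V) (T' : Finset V) (x : Sym2 V → ℝ) : Prop :=
  (∀ e ∈ edgesOf G, 0 ≤ x e) ∧
  (∀ W : Finset V, W.Nonempty → W ≠ Finset.univ → Odd ((W ∩ T').card) →
      1 ≤ xval x (cutEdges G W))

/-- Symmetric difference of two finite sets. -/
def symDiff (A B : Finset V) : Finset V := (A \ B) ∪ (B \ A)

/-- `p*(e) = Σ_{F ∈ 𝓕, e ∈ F(T)} λ_F`, where `JT F` plays the role of `F(T)`. -/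
def pstar (𝓕 : Finset (Finset (Sym2 V))) (lam : Finset (Sym2 V) → ℝ)
    (JT : Finset (Sym2 V) → Finset (Sym2 V)) (e : Sym2 V) : ℝ :=
  ∑ F ∈ 𝓕.filter (fun F => e ∈ JT F), lam F

/-- `q*(e) = Σ_{F ∈ 𝓕, e ∈ F ∖ F(T)} λ_F`. -/
def qstar (𝓕 : Finset (Finset (Sym2 V))) (lam : Finset (Sym2 V) → ℝ)
    (JT : Finset (Sym2 V) → Finset (Sym2 V)) (e : Sym2 V) : ℝ :=
  ∑ F ∈ 𝓕.filter (fun F => e ∈ F \ JT F), lam F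

/-- `𝒬`: the family of cuts `Q` of `G` (as edge sets) with `x*(Q) < 2`. -/
def Qset (G : SimpleGraph V) (xstar : Sym2 V → ℝ) : Finset (Finset (Sym2 V)) :=
  Finset.univ.filter (fun C : Finset (Sym2 V) =>
    (∃ W : Finset V, W.Nonempty ∧ W ≠ Finset.univ ∧ C = cutEdges G W) ∧ xval xstar C < 2)

/-- `x^Q(e) = Σ_{F ∈ 𝓕, Q ∩ F = {e}} λ_F`. -/
def xQ (𝓕 : Finset (Finset (Sym2 V))) (lam : Finset (Sym2 V) → ℝ)
    (C : Finset (Sym2 V)) (e : Sym2 V) : ℝ :=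
  ∑ F ∈ 𝓕.filter (fun F => C ∩ F = {e}), lam F

/-- `f^Q(β) = max {0, (4β - 1 - β x*(Q)) / (2 - x*(Q))}`. -/
def fQ (xstar : Sym2 V → ℝ) (β : ℝ) (C : Finset (Sym2 V)) : ℝ :=
  max 0 ((4 * β - 1 - β * xval xstar C) / (2 - xval xstar C))

/-- `s^F(β) = Σ_{Q ∈ 𝒬, |Q ∩ F| ≥ 2} f^Q(β) x^Q`. -/
def sF (G : SimpleGraph V) (xstar : Sym2 V → ℝ) (𝓕 : Finset (Finset (Sym2 V)))
    (lam : Finset (Sym2 V) → ℝ) (β : ℝ) (F : Finset (Sym2 V)) (e : Sym2 V) : ℝ :=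
  ∑ C ∈ (Qset G xstar).filter (fun C => 2 ≤ (C ∩ F).card), fQ xstar β C * xQ 𝓕 lam C e

end

section Helpers

variable {V : Type*} [Fintype V] [DecidableEq V]

lemma mem_edgesOf {G : SimpleGraph V} {e : Sym2 V} : e ∈ edgesOf G ↔ e ∈ G.edgeSet := by
  simp [edgesOf]

lemma mem_cutEdges_iff {G : SimpleGraph V} {W : Finset V} {u v : V}
    (h : s(u, v) ∈ edgesOf G) :
    s(u, v) ∈ cutEdges G W ↔ ((u ∈ W) ↔ (v ∉ W)) := by
  simp only [cutEdges, mem_filter, h, true_and]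
  constructor
  · rintro ⟨a, b, hab, ha, hb⟩
    rw [Sym2.eq_iff] at hab
    rcases hab with ⟨rfl, rfl⟩ | ⟨rfl, rfl⟩ <;> tauto
  · intro hiff
    by_cases hu : u ∈ W
    · exact ⟨u, v, rfl, hu, hiff.mp hu⟩
    · have hv : v ∈ W := by tauto
      exact ⟨v, u, Sym2.eq_swap.symm, hv, hu⟩

lemma cutEdges_compl {G : SimpleGraph V} {W : Finset V} :
    cutEdges G Wᶜ = cutEdges G W := by
  ext e
  induction e using Sym2.ind with
  | _ u v =>
    by_cases h : s(u, v) ∈ edgesOf G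
    · rw [mem_cutEdges_iff h, mem_cutEdges_iff h]
      simp only [Finset.mem_compl]
      tauto
    · constructor <;> intro hm <;>
        exact absurd (Finset.mem_of_mem_filter _ hm) h

lemma adj_fromEdgeSet {F : Finset (Sym2 V)} {a b : V} :
    (SimpleGraph.fromEdgeSet (F : Set (Sym2 V))).Adj a b ↔ s(a, b) ∈ F ∧ a ≠ b := by
  rw [SimpleGraph.fromEdgeSet_adj]; simp

lemma const_on_connected (H : SimpleGraph V) (hH : H.Preconnected) (P : V → Prop)
    (hP : ∀ a b, H.Adj a b → (P a ↔ P b)) : ∀ u v, P u ↔ P v := by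
  intro u v
  obtain ⟨w⟩ := hH u v
  induction w with
  | nil => exact Iff.rfl
  | cons h _ ih => exact (hP _ _ h).trans ih

lemma exists_crossing (H : SimpleGraph V) {W : Finset V} :
    ∀ {u v : V}, H.Walk u v → u ∈ W → v ∉ W →
      ∃ a b, H.Adj a b ∧ a ∈ W ∧ b ∉ W := by
  intro u v w
  induction w with
  | nil => intro hu hv; exact absurd hu hv
  | @cons a b c h _ ih =>
    intro ha hc
    by_cases hb : b ∈ W
    · exact ih hb hc
    · exact ⟨a, b, h, ha, hb⟩

lemma tree_crosses {G : SimpleGraph V} {F : Finset (Sym2 V)} (hF : IsSpanningTree G F)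
    {W : Finset V} (hWne : W.Nonempty) (hWu : W ≠ Finset.univ) :
    ∃ f, f ∈ cutEdges G W ∧ f ∈ F := by
  obtain ⟨u, hu⟩ := hWne
  obtain ⟨v, hv⟩ : ∃ v, v ∉ W := by
    by_contra hcon
    push_neg at hcon
    exact hWu (Finset.eq_univ_iff_forall.mpr hcon)
  obtain ⟨w⟩ := hF.2.1.preconnected u v
  obtain ⟨a, b, hab, ha, hb⟩ := exists_crossing _ w hu hv
  rw [adj_fromEdgeSet] at hab
  have hE : s(a, b) ∈ edgesOf G := hF.1 hab.1
  exact ⟨s(a, b), (mem_cutEdges_iff hE).mpr (by tauto), hab.1⟩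

lemma cut_unique {G : SimpleGraph V} {F : Finset (Sym2 V)} (hF : IsSpanningTree G F)
    {W₁ W₂ : Finset V} {e : Sym2 V}
    (h1 : cutEdges G W₁ ∩ F = {e}) (h2 : cutEdges G W₂ ∩ F = {e}) :
    cutEdges G W₁ = cutEdges G W₂ := by
  set P : V → Prop := fun v => ((v ∈ W₁) ↔ (v ∈ W₂)) with hP
  have key : ∀ a b, (SimpleGraph.fromEdgeSet (F : Set (Sym2 V))).Adj a b → (P a ↔ P b) := by
    intro a b hab
    rw [adj_fromEdgeSet] at hab
    have hE : s(a, b) ∈ edgesOf G := hF.1 hab.1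
    by_cases he : s(a, b) = e
    · have hc1 : s(a, b) ∈ cutEdges G W₁ := by
        have : e ∈ cutEdges G W₁ ∩ F := h1 ▸ Finset.mem_singleton_self e
        exact he ▸ (Finset.mem_inter.mp this).1
      have hc2 : s(a, b) ∈ cutEdges G W₂ := by
        have : e ∈ cutEdges G W₂ ∩ F := h2 ▸ Finset.mem_singleton_self e
        exact he ▸ (Finset.mem_inter.mp this).1
      rw [mem_cutEdges_iff hE] at hc1 hc2
      simp only [hP]; tauto
    · have hc1 : s(a, b) ∉ cutEdges G W₁ := by
        intro hc
        exact he (Finset.mem_singleton.mp (h1 ▸ Finset.mem_inter.mpr ⟨hc, hab.1⟩))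
      have hc2 : s(a, b) ∉ cutEdges G W₂ := by
        intro hc
        exact he (Finset.mem_singleton.mp (h2 ▸ Finset.mem_inter.mpr ⟨hc, hab.1⟩))
      rw [mem_cutEdges_iff hE] at hc1 hc2
      simp only [hP]; tauto
  have hconst := const_on_connected _ hF.2.1.preconnected P key
  have : Nonempty V := hF.2.1.nonempty
  obtain ⟨v0⟩ := this
  by_cases hp : P v0
  · have hW : W₁ = W₂ := by
      ext v
      exact (hconst v v0).mpr hp
    rw [hW]
  · have hW : W₂ = W₁ᶜ := by
      ext v
      have hv := (hconst v v0)
      simp only [hP] at hv hp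
      rw [Finset.mem_compl]
      tauto
    rw [hW, cutEdges_compl]

lemma zmod2_eq_one_iff_odd (n : ℕ) : (n : ZMod 2) = 1 ↔ Odd n := by
  rw [Nat.odd_iff, ← ZMod.natCast_mod n 2]
  rcases Nat.mod_two_eq_zero_or_one n with h | h <;> simp [h]

lemma tjoin_odd_cut {G : SimpleGraph V} {T : Finset V} {J : Finset (Sym2 V)}
    (hJ : IsTJoin G T J) {W : Finset V} (hodd : Odd ((W ∩ T).card)) :
    Odd ((J ∩ cutEdges G W).card) := by
  have key : ∀ f ∈ J, ((W.filter (fun v => v ∈ f)).card : ZMod 2)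
      = if f ∈ cutEdges G W then 1 else 0 := by
    intro f hf
    have hfE : f ∈ edgesOf G := hJ.1 hf
    induction f using Sym2.ind with
    | _ a b =>
      have hne : a ≠ b := by
        have hadj : G.Adj a b := (G.mem_edgeSet).mp (mem_edgesOf.mp hfE)
        exact hadj.ne
      have hfilter : W.filter (fun v => v ∈ s(a, b)) = W ∩ {a, b} := by
        ext v
        simp [Sym2.mem_iff, Finset.mem_inter, Finset.mem_insert, and_comm]
      rw [hfilter]
      have hcut := mem_cutEdges_iff (W := W) hfE
      by_cases ha : a ∈ W <;> by_cases hb : b ∈ W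
      · rw [if_neg (by rw [hcut]; tauto)]
        have : W ∩ {a, b} = {a, b} := by
          apply Finset.inter_eq_right.mpr
          intro v hv
          rcases Finset.mem_insert.mp hv with rfl | hv
          · exact ha
          · rwa [Finset.mem_singleton.mp hv]
        rw [this, Finset.card_pair hne]
        decide
      · rw [if_pos (by rw [hcut]; tauto)]
        have : W ∩ {a, b} = {a} := by
          ext v
          simp only [Finset.mem_inter, Finset.mem_insert, Finset.mem_singleton]
          constructor
          · rintro ⟨hvW, rfl | rfl⟩
            · rfl
            · exact absurd hvW hb
          · rintro rfl; exact ⟨ha, Or.inl rfl⟩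
        rw [this, Finset.card_singleton]
        decide
      · rw [if_pos (by rw [hcut]; tauto)]
        have : W ∩ {a, b} = {b} := by
          ext v
          simp only [Finset.mem_inter, Finset.mem_insert, Finset.mem_singleton]
          constructor
          · rintro ⟨hvW, rfl | rfl⟩
            · exact absurd hvW ha
            · rfl
          · rintro rfl; exact ⟨hb, Or.inr rfl⟩
        rw [this, Finset.card_singleton]
        decide
      · rw [if_neg (by rw [hcut]; tauto)]
        have : W ∩ {a, b} = ∅ := by
          ext v
          simp only [Finset.mem_inter, Finset.mem_insert, Finset.mem_singleton,
            Finset.notMem_empty, iff_false, not_and]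
          rintro hvW (rfl | rfl) <;> tauto
        rw [this, Finset.card_empty]
        decide
  have hA : (∑ v ∈ W, (degOn J v : ZMod 2)) = ((J ∩ cutEdges G W).card : ZMod 2) := by
    have : (∑ v ∈ W, (degOn J v : ZMod 2))
        = ∑ f ∈ J, ((W.filter (fun v => v ∈ f)).card : ZMod 2) := by
      simp only [degOn, Finset.card_filter]
      push_cast
      rw [Finset.sum_comm]
    rw [this, Finset.sum_congr rfl key, ← Finset.sum_filter, Finset.sum_const,
      Finset.filter_mem_eq_inter, nsmul_eq_mul, mul_one]
  have hB : (∑ v ∈ W, (degOn J v : ZMod 2)) = (((W ∩ T).card : ZMod 2)) := by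
    have hodd_iff : ∀ v : V, Odd (degOn J v) ↔ v ∈ T := by
      intro v
      rw [← hJ.2]
      simp [oddVerts]
    have : ∀ v ∈ W, (degOn J v : ZMod 2) = if v ∈ T then 1 else 0 := by
      intro v _
      by_cases hv : v ∈ T
      · rw [if_pos hv, zmod2_eq_one_iff_odd]
        exact (hodd_iff v).mpr hv
      · rw [if_neg hv]
        have : ¬ Odd (degOn J v) := fun h => hv ((hodd_iff v).mp h)
        rw [Nat.odd_iff] at this
        rw [← ZMod.natCast_mod (degOn J v) 2]
        rcases Nat.mod_two_eq_zero_or_one (degOn J v) with h | h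
        · simp [h]
        · exact absurd h this
    rw [Finset.sum_congr rfl this, ← Finset.sum_filter, Finset.sum_const,
      Finset.filter_mem_eq_inter, nsmul_eq_mul, mul_one]
  rw [← zmod2_eq_one_iff_odd, ← hA, hB, zmod2_eq_one_iff_odd]
  exact hodd

lemma partitionCut_pair {G : SimpleGraph V} {W : Finset V} :
    partitionCut G ({W, Wᶜ} : Finset (Finset V)) = cutEdges G W := by
  ext e
  induction e using Sym2.ind with
  | _ u v =>
    by_cases h : s(u, v) ∈ edgesOf G
    · rw [mem_cutEdges_iff h]
      simp only [partitionCut, Finset.mem_filter, h, true_and, Finset.mem_insert,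
        Finset.mem_singleton, Sym2.mem_iff]
      have hexists : (∃ W', (W' = W ∨ W' = Wᶜ) ∧ ∀ x : V, x = u ∨ x = v → x ∈ W')
          ↔ ((u ∈ W ∧ v ∈ W) ∨ (u ∉ W ∧ v ∉ W)) := by
        constructor
        · rintro ⟨W', hW', hall⟩
          have hu := hall u (Or.inl rfl)
          have hv := hall v (Or.inr rfl)
          rcases hW' with rfl | rfl
          · exact Or.inl ⟨hu, hv⟩
          · exact Or.inr ⟨Finset.mem_compl.mp hu, Finset.mem_compl.mp hv⟩
        · rintro (⟨hu, hv⟩ | ⟨hu, hv⟩)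
          · exact ⟨W, Or.inl rfl, by rintro x (rfl | rfl) <;> assumption⟩
          · exact ⟨Wᶜ, Or.inr rfl, by rintro x (rfl | rfl) <;> exact Finset.mem_compl.mpr ‹_›⟩
      rw [hexists]
      tauto
    · simp only [partitionCut, cutEdges, Finset.mem_filter]
      tauto

lemma pair_isPartition {W : Finset V} (hWne : W.Nonempty) (hWu : W ≠ Finset.univ) :
    IsPartitionOf ({W, Wᶜ} : Finset (Finset V)) := by
  refine ⟨?_, ?_, ?_⟩
  · intro W' hW'
    rcases Finset.mem_insert.mp hW' with rfl | hW'
    · exact hWne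
    · rw [Finset.mem_singleton.mp hW']
      obtain ⟨v, hv⟩ : ∃ v, v ∉ W := by
        by_contra hcon
        push_neg at hcon
        exact hWu (Finset.eq_univ_iff_forall.mpr hcon)
      exact ⟨v, Finset.mem_compl.mpr hv⟩
  · intro W₁ h₁ W₂ h₂ hne
    simp only [Finset.mem_insert, Finset.mem_singleton] at h₁ h₂
    rcases h₁ with rfl | rfl <;> rcases h₂ with rfl | rfl
    · exact absurd rfl hne
    · exact disjoint_compl_right
    · exact disjoint_compl_left
    · exact absurd rfl hne
  · intro v
    by_cases hv : v ∈ W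
    · exact ⟨W, Finset.mem_insert_self _ _, hv⟩
    · exact ⟨Wᶜ, Finset.mem_insert.mpr (Or.inr (Finset.mem_singleton_self _)),
        Finset.mem_compl.mpr hv⟩

lemma cut_xval_ge_one {G : SimpleGraph V} {T : Finset V} {xstar : Sym2 V → ℝ}
    (hxP : memP G T xstar) {W : Finset V} (hWne : W.Nonempty) (hWu : W ≠ Finset.univ) :
    1 ≤ xval xstar (cutEdges G W) := by
  have hpart := pair_isPartition hWne hWu
  have hcard : ({W, Wᶜ} : Finset (Finset V)).card = 2 := by
    rw [Finset.card_pair]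
    intro h
    obtain ⟨v, hv⟩ := hWne
    have : v ∈ Wᶜ := h ▸ hv
    exact (Finset.mem_compl.mp this) hv
  have := hxP.2.1 _ hpart
  rw [hcard, partitionCut_pair] at this
  norm_num at this
  linarith

lemma key_real_ineq {β s z Λ : ℝ} (hβ0 : 0 < β) (hs0 : 0 < s)
    (hs : β * (s * s) = 1 - 2 * β)
    (hz1 : 1 ≤ z) (hz2 : z < 2) (hΛ0 : 0 ≤ Λ) (hΛ : Λ ≤ z - 1) :
    Λ * max 0 ((4 * β - 1 - β * z) / (2 - z)) ≤ β * (1 - s) ^ 2 := by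
  have hfβ : (0:ℝ) ≤ β * (1 - s) ^ 2 := by positivity
  rcases le_or_gt ((4 * β - 1 - β * z) / (2 - z)) 0 with h | h
  · rw [max_eq_left h, mul_zero]
    exact hfβ
  · rw [max_eq_right h.le]
    have h2z : (0:ℝ) < 2 - z := by linarith
    have hN : 0 < 4 * β - 1 - β * z := by
      have := mul_pos h h2z
      rwa [div_mul_cancel₀ _ h2z.ne'] at this
    rw [mul_div_assoc', div_le_iff₀ h2z]
    have step1 : Λ * (4 * β - 1 - β * z) ≤ (z - 1) * (4 * β - 1 - β * z) :=
      mul_le_mul_of_nonneg_right hΛ hN.le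
    refine step1.trans ?_
    nlinarith [mul_nonneg hβ0.le (sq_nonneg (z - 2 + s)), hs]

lemma mem_Qset_iff {G : SimpleGraph V} {xstar : Sym2 V → ℝ} {C : Finset (Sym2 V)} :
    C ∈ Qset G xstar ↔
      (∃ W : Finset V, W.Nonempty ∧ W ≠ Finset.univ ∧ C = cutEdges G W) ∧
        xval xstar C < 2 := by
  simp [Qset]

end Helpers

/-- for every `β ∈ (1/3, 1/2)`,
`Σ_F λ_F s^F(β) ≤ f(β) p*` componentwise, where
`f(β) = β ω (3 - 1/β - ω)/(1 - ω)` with `ω = 1 - √(1/β - 2)`. -/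
theorem stmt16 {V : Type*} [Fintype V] [DecidableEq V]
    (G : SimpleGraph V) (hG : G.Connected)
    (T : Finset V) (hT : Even T.card)
    (c : Sym2 V → ℝ) (hc : ∀ e, 0 ≤ c e)
    (xstar : Sym2 V → ℝ) (hxP : memP G T xstar)
    (hxmin : ∀ y : Sym2 V → ℝ, memP G T y → dotE G c xstar ≤ dotE G c y)
    (𝓕 : Finset (Finset (Sym2 V))) (lam : Finset (Sym2 V) → ℝ)
    (h𝓕 : ∀ F ∈ 𝓕, IsSpanningTree G F) (hlam : ∀ F ∈ 𝓕, 0 < lam F)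
    (hsum : ∑ F ∈ 𝓕, lam F = 1)
    (hdom : ∀ e ∈ edgesOf G, (∑ F ∈ 𝓕.filter (fun F => e ∈ F), lam F) ≤ xstar e)
    (JT : Finset (Sym2 V) → Finset (Sym2 V))
    (hJT : ∀ F ∈ 𝓕, JT F ⊆ F ∧ IsTJoin G T (JT F))
    (β : ℝ) (hβ1 : 1 / 3 < β) (hβ2 : β < 1 / 2) :
    ∀ e : Sym2 V,
      (∑ F ∈ 𝓕, lam F * sF G xstar 𝓕 lam β F e) ≤
        (β * (1 - Real.sqrt (1 / β - 2)) *
          (3 - 1 / β - (1 - Real.sqrt (1 / β - 2))) /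
          (1 - (1 - Real.sqrt (1 / β - 2)))) * pstar 𝓕 lam JT e := by
  intro e
  have hβ0 : (0:ℝ) < β := by linarith
  set s := Real.sqrt (1 / β - 2) with hs_def
  have harg : (0:ℝ) < 1 / β - 2 := by
    have h2 : (2:ℝ) < 1 / β := by
      rw [lt_div_iff₀ hβ0]; linarith
    linarith
  have hss : s * s = 1 / β - 2 := Real.mul_self_sqrt harg.le
  have hs0 : 0 < s := Real.sqrt_pos.mpr harg
  have hβs : β * (s * s) = 1 - 2 * β := by
    rw [hss]; field_simp
  have hcoef : β * (1 - s) * (3 - 1 / β - (1 - s)) / (1 - (1 - s)) = β * (1 - s) ^ 2 := by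
    have h1β : 1 / β = s * s + 2 := by linarith
    rw [h1β]
    have hsne : s ≠ 0 := hs0.ne'
    rw [sub_sub_cancel, div_eq_iff hsne]
    ring
  rw [hcoef]
  have hfβ0 : (0:ℝ) ≤ β * (1 - s) ^ 2 := by positivity
  -- key bound per cut
  have hkey : ∀ C ∈ Qset G xstar,
      (∑ F ∈ 𝓕.filter (fun F => 2 ≤ (C ∩ F).card), lam F) * fQ xstar β C
        ≤ β * (1 - s) ^ 2 := by
    intro C hC
    obtain ⟨⟨W, hWne, hWu, hCW⟩, hz2⟩ := mem_Qset_iff.mp hC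
    have hz1 : 1 ≤ xval xstar C := hCW ▸ cut_xval_ge_one hxP hWne hWu
    have hΛ0 : 0 ≤ ∑ F ∈ 𝓕.filter (fun F => 2 ≤ (C ∩ F).card), lam F :=
      Finset.sum_nonneg fun F hF => (hlam F (Finset.mem_of_mem_filter F hF)).le
    have hΛ : (∑ F ∈ 𝓕.filter (fun F => 2 ≤ (C ∩ F).card), lam F) ≤ xval xstar C - 1 := by
      have hcard1 : ∀ F ∈ 𝓕, (1:ℝ) ≤ ((C ∩ F).card : ℝ) := by
        intro F hF
        obtain ⟨f, hfc, hff⟩ := tree_crosses (h𝓕 F hF) hWne hWu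
        have hmem : f ∈ C ∩ F := Finset.mem_inter.mpr ⟨hCW ▸ hfc, hff⟩
        have := Finset.card_pos.mpr ⟨f, hmem⟩
        exact_mod_cast this
      have step1 : (∑ F ∈ 𝓕.filter (fun F => 2 ≤ (C ∩ F).card), lam F)
          ≤ ∑ F ∈ 𝓕, lam F * (((C ∩ F).card : ℝ) - 1) := by
        calc (∑ F ∈ 𝓕.filter (fun F => 2 ≤ (C ∩ F).card), lam F)
            ≤ ∑ F ∈ 𝓕.filter (fun F => 2 ≤ (C ∩ F).card),
                lam F * (((C ∩ F).card : ℝ) - 1) := by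
              apply Finset.sum_le_sum
              intro F hF
              have hm := Finset.mem_filter.mp hF
              have h2 : (2:ℝ) ≤ ((C ∩ F).card : ℝ) := by exact_mod_cast hm.2
              nlinarith [hlam F hm.1]
          _ ≤ ∑ F ∈ 𝓕, lam F * (((C ∩ F).card : ℝ) - 1) := by
              apply Finset.sum_le_sum_of_subset_of_nonneg (Finset.filter_subset _ _)
              intro F hF _
              have := hcard1 F hF
              nlinarith [hlam F hF]
      have step2 : ∑ F ∈ 𝓕, lam F * ((C ∩ F).card : ℝ) ≤ xval xstar C := by
        have hrw : ∀ F ∈ 𝓕,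
            lam F * ((C ∩ F).card : ℝ) = ∑ f ∈ C, if f ∈ F then lam F else 0 := by
          intro F _
          have hcc : ((C ∩ F).card : ℝ) = ∑ f ∈ C, if f ∈ F then (1:ℝ) else 0 := by
            rw [← Finset.filter_mem_eq_inter, Finset.card_filter]
            push_cast
            rfl
          rw [hcc, Finset.mul_sum]
          simp [mul_ite]
        rw [Finset.sum_congr rfl hrw, Finset.sum_comm]
        unfold xval
        apply Finset.sum_le_sum
        intro f hf
        have hfE : f ∈ edgesOf G := by
          have : f ∈ cutEdges G W := hCW ▸ hf
          exact Finset.mem_of_mem_filter _ this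
        calc (∑ F ∈ 𝓕, if f ∈ F then lam F else 0)
            = ∑ F ∈ 𝓕.filter (fun F => f ∈ F), lam F := (Finset.sum_filter _ _).symm
          _ ≤ xstar f := hdom f hfE
      have expand : ∑ F ∈ 𝓕, lam F * (((C ∩ F).card : ℝ) - 1)
          = (∑ F ∈ 𝓕, lam F * ((C ∩ F).card : ℝ)) - 1 := by
        simp only [mul_sub, mul_one]
        rw [Finset.sum_sub_distrib, hsum]
      linarith
    have := key_real_ineq hβ0 hs0 hβs hz1 hz2 hΛ0 hΛ
    simpa [fQ] using this
  calc (∑ F ∈ 𝓕, lam F * sF G xstar 𝓕 lam β F e)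
      = ∑ C ∈ Qset G xstar,
          (∑ F ∈ 𝓕.filter (fun F => 2 ≤ (C ∩ F).card), lam F)
            * (fQ xstar β C * xQ 𝓕 lam C e) := by
        simp only [sF, Finset.mul_sum, Finset.sum_filter, Finset.sum_mul, ite_mul,
          zero_mul, mul_ite, mul_zero]
        rw [Finset.sum_comm]
    _ ≤ ∑ C ∈ Qset G xstar, (β * (1 - s) ^ 2) * xQ 𝓕 lam C e := by
        apply Finset.sum_le_sum
        intro C hC
        have hxQ0 : 0 ≤ xQ 𝓕 lam C e :=
          Finset.sum_nonneg fun F hF => (hlam F (Finset.mem_of_mem_filter F hF)).le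
        calc (∑ F ∈ 𝓕.filter (fun F => 2 ≤ (C ∩ F).card), lam F)
              * (fQ xstar β C * xQ 𝓕 lam C e)
            = ((∑ F ∈ 𝓕.filter (fun F => 2 ≤ (C ∩ F).card), lam F) * fQ xstar β C)
                * xQ 𝓕 lam C e := by ring
          _ ≤ (β * (1 - s) ^ 2) * xQ 𝓕 lam C e :=
              mul_le_mul_of_nonneg_right (hkey C hC) hxQ0
    _ = (β * (1 - s) ^ 2) * ∑ C ∈ Qset G xstar, xQ 𝓕 lam C e := by
        rw [Finset.mul_sum]
    _ ≤ (β * (1 - s) ^ 2) * pstar 𝓕 lam JT e := by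
        apply mul_le_mul_of_nonneg_left ?_ hfβ0
        have h1 : ∑ C ∈ Qset G xstar, xQ 𝓕 lam C e
            = ∑ F ∈ 𝓕, ((Qset G xstar).filter (fun C => C ∩ F = {e})).card • lam F := by
          simp only [xQ, Finset.sum_filter]
          rw [Finset.sum_comm]
          refine Finset.sum_congr rfl fun F _ => ?_
          rw [← Finset.sum_filter, Finset.sum_const]
        have h2 : pstar 𝓕 lam JT e = ∑ F ∈ 𝓕, if e ∈ JT F then lam F else 0 := by
          simp [pstar, Finset.sum_filter]
        rw [h1, h2]
        apply Finset.sum_le_sum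
        intro F hF
        by_cases hcard : ((Qset G xstar).filter (fun C => C ∩ F = {e})).card = 0
        · rw [hcard, zero_smul]
          split_ifs with h
          · exact (hlam F hF).le
          · exact le_refl 0
        · obtain ⟨C, hC⟩ := Finset.card_pos.mp (Nat.pos_of_ne_zero hcard)
          have hCm := Finset.mem_filter.mp hC
          obtain ⟨⟨W, hWne, hWu, hCW⟩, hz2⟩ := mem_Qset_iff.mp hCm.1
          have hoddWT : Odd ((W ∩ T).card) := by
            rw [← Nat.not_even_iff_odd]
            intro heven
            have hge := hxP.1 W hWne hWu heven
            rw [← hCW] at hge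
            linarith
          have hJTF := hJT F hF
          have hodd := tjoin_odd_cut hJTF.2 hoddWT
          have hjne : (JT F ∩ cutEdges G W).Nonempty := by
            rw [← Finset.card_pos]
            rcases hodd with ⟨k, hk⟩
            omega
          obtain ⟨f, hf⟩ := hjne
          have hfm := Finset.mem_inter.mp hf
          have hfCF : f ∈ C ∩ F := Finset.mem_inter.mpr ⟨hCW ▸ hfm.2, hJTF.1 hfm.1⟩
          have hfe : f = e := by
            rw [hCm.2] at hfCF
            exact Finset.mem_singleton.mp hfCF
          have heJT : e ∈ JT F := hfe ▸ hfm.1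
          rw [if_pos heJT, nsmul_eq_mul]
          have hcle : ((Qset G xstar).filter (fun C => C ∩ F = {e})).card ≤ 1 := by
            rw [Finset.card_le_one]
            intro C₁ h₁ C₂ h₂
            have h₁' := Finset.mem_filter.mp h₁
            have h₂' := Finset.mem_filter.mp h₂
            obtain ⟨⟨W₁, hW₁ne, hW₁u, hC₁⟩, _⟩ := mem_Qset_iff.mp h₁'.1
            obtain ⟨⟨W₂, hW₂ne, hW₂u, hC₂⟩, _⟩ := mem_Qset_iff.mp h₂'.1
            subst hC₁; subst hC₂
            exact cut_unique (h𝓕 F hF) h₁'.2 h₂'.2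
          have hcleR : (((Qset G xstar).filter (fun C => C ∩ F = {e})).card : ℝ) ≤ 1 := by
            exact_mod_cast hcle
          nlinarith [hlam F hF]
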